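/- Let I be a finite nonempty index set and let q, t : I → ℝ be probability mass functions (q i ≥ 0, t i ≥ 0 for all i, and Σ_{i∈I} q i = Σ_{i∈I} t i = 1). For β ∈ ℝ define S(β) = {i ∈ I : β·q i − t i ≥ 0}, Q(β) = Σ_{i∈S(β)} q i, and Sp(β) = Σ_{i∈I} max(0, β·q i − t i). Then for all real numbers β₁, β₂ with 1 ≤ β₁ < β₂, one has Sp(β₂) − Sp(β₁) ≥ (β₂ − β₁)·Q(β₁) > 0; in particular Sp is strictly increasing on [1, ∞). -/
import Mathlib


open Real Finset

open Classical in
/-- Strict monotonicity of `Sp` on `[1, ∞)`: for `1 ≤ β₁ < β₂`,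
`Sp(β₂) − Sp(β₁) ≥ (β₂ − β₁)·Q(β₁) > 0`, where `Q(β) = Σ_{i∈S(β)} q i` and
`S(β) = {i : β·q i − t i ≥ 0}`; in particular `Sp` is strictly increasing
on `[1, ∞)`. -/
theorem Sp_strict_mono {I : Type*} [Fintype I] [Nonempty I]
    (q t : I → ℝ) (hq : ∀ i, 0 ≤ q i) (ht : ∀ i, 0 ≤ t i)
    (hqs : ∑ i, q i = 1) (hts : ∑ i, t i = 1)
    (S : ℝ → Finset I) (hS : ∀ β : ℝ, S β = Finset.univ.filter (fun i => 0 ≤ β * q i - t i))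
    (Q : ℝ → ℝ) (hQ : ∀ β : ℝ, Q β = ∑ i ∈ S β, q i)
    (Sp : ℝ → ℝ) (hSp : ∀ β : ℝ, Sp β = ∑ i, max 0 (β * q i - t i)) :
    (∀ β₁ β₂ : ℝ, 1 ≤ β₁ → β₁ < β₂ →
      Sp β₂ - Sp β₁ ≥ (β₂ - β₁) * Q β₁ ∧ 0 < (β₂ - β₁) * Q β₁) ∧
      StrictMonoOn Sp (Set.Ici 1) := by
  have key : ∀ β₁ β₂ : ℝ, 1 ≤ β₁ → β₁ < β₂ →
      Sp β₂ - Sp β₁ ≥ (β₂ - β₁) * Q β₁ ∧ 0 < (β₂ - β₁) * Q β₁ := by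
    intro β₁ β₂ h1 h12
    have hQpos : 0 < Q β₁ := by
      rw [hQ]
      by_contra h
      push_neg at h
      have hnn : 0 ≤ ∑ i ∈ S β₁, q i := Finset.sum_nonneg fun i _ => hq i
      have hz : ∀ i ∈ S β₁, q i = 0 := fun i hi =>
        (Finset.sum_eq_zero_iff_of_nonneg (fun i _ => hq i)).mp (le_antisymm h hnn) i hi
      have hlt : ∀ i, 0 < q i → β₁ * q i < t i := by
        intro i hqi
        by_contra hge
        push_neg at hge
        have hiS : i ∈ S β₁ := by
          rw [hS]; simp [sub_nonneg, hge]
        exact absurd (hz i hiS) (ne_of_gt hqi)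
      set P := Finset.univ.filter (fun i => 0 < q i) with hP
      have hPne : P.Nonempty := by
        by_contra hPe
        rw [Finset.not_nonempty_iff_eq_empty] at hPe
        have hz0 : ∑ i, q i = 0 := by
          apply Finset.sum_eq_zero
          intro i _
          by_contra hne
          have hpos : 0 < q i := lt_of_le_of_ne (hq i) (Ne.symm hne)
          have hiP : i ∈ P := by simp [hP, hpos]
          simp [hPe] at hiP
        linarith [hqs]
      have hsumq : ∑ i ∈ P, q i = 1 := by
        rw [← hqs]
        apply Finset.sum_filter_of_ne
        intro i _ hne
        exact lt_of_le_of_ne (hq i) (Ne.symm hne)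
      have hstrict : ∑ i ∈ P, β₁ * q i < ∑ i ∈ P, t i :=
        Finset.sum_lt_sum_of_nonempty hPne (fun i hi => hlt i (by
          rw [hP] at hi; exact (Finset.mem_filter.mp hi).2))
      have hle : ∑ i ∈ P, t i ≤ ∑ i, t i :=
        Finset.sum_le_sum_of_subset_of_nonneg (Finset.subset_univ P)
          (fun i _ _ => ht i)
      have : β₁ < 1 := by
        have : ∑ i ∈ P, β₁ * q i = β₁ := by
          rw [← Finset.mul_sum, hsumq, mul_one]
        linarith [hts]
      linarith
    have hmain : Sp β₂ - Sp β₁ ≥ (β₂ - β₁) * Q β₁ := by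
      have hRHS : (β₂ - β₁) * Q β₁
          = ∑ i, (if 0 ≤ β₁ * q i - t i then (β₂ - β₁) * q i else 0) := by
        rw [hQ, hS, Finset.mul_sum, Finset.sum_filter]
      rw [hSp, hSp, ← Finset.sum_sub_distrib, hRHS]
      apply Finset.sum_le_sum
      intro i _
      by_cases hc : 0 ≤ β₁ * q i - t i
      · rw [if_pos hc, max_eq_right hc]
        have h2 : β₂ * q i - t i ≤ max 0 (β₂ * q i - t i) := le_max_right _ _
        have hqi := hq i
        nlinarith
      · rw [if_neg hc]
        push_neg at hc
        rw [max_eq_left (le_of_lt hc)]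
        have h2 : (0:ℝ) ≤ max 0 (β₂ * q i - t i) := le_max_left _ _
        linarith
    exact ⟨hmain, mul_pos (by linarith) hQpos⟩
  refine ⟨key, ?_⟩
  intro β₁ hβ₁ β₂ _ h12
  obtain ⟨h1, h2⟩ := key β₁ β₂ hβ₁ h12
  linarith
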